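/- Let 0 < r < 1 and let N be a bounded linear operator on a complex Hilbert space K. Then N is an 𝔸_r-unitary if and only if there exist closed, mutually orthogonal subspaces K₁ and K₂ of K with K = K₁ ⊕ K₂, both invariant under N and under N*, such that the restriction of N to K₁ is a unitary operator on K₁ and the restriction of r⁻¹N to K₂ is a unitary operator on K₂ (i.e. with respect to K = K₁ ⊕ K₂ one has N = U₁ ⊕ rU₂ for unitaries U₁ on K₁ and U₂ on K₂). -/

import Mathlib

open ContinuousLinearMap

section AuxLemmas

variable {K : Type*} [NormedAddCommGroup K] [InnerProductSpace ℂ K] [CompleteSpace K]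

variable {K : Type*} [NormedAddCommGroup K] [InnerProductSpace ℂ K] [CompleteSpace K]

/-- restriction of N to an invariant closed subspace -/
noncomputable def restrictCLM (N : K →L[ℂ] K) (K₀ : Submodule ℂ K)
    (hinv : ∀ h ∈ K₀, N h ∈ K₀) : ↥K₀ →L[ℂ] ↥K₀ :=
  { toLinearMap := (N.toLinearMap).restrict hinv
    cont := Continuous.subtype_mk (N.continuous.comp continuous_subtype_val) _ }

@[simp] lemma restrictCLM_apply (N : K →L[ℂ] K) (K₀ : Submodule ℂ K)
    (hinv : ∀ h ∈ K₀, N h ∈ K₀) (x : ↥K₀) :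
    (restrictCLM N K₀ hinv x : K) = N x := rfl

lemma surj_aux (N : K →L[ℂ] K) (c : ℝ) (hc : 0 < c) (K₀ : Submodule ℂ K)
    (hcl : IsClosed (K₀ : Set K)) (hinv : ∀ h ∈ K₀, N h ∈ K₀)
    (hiso : ∀ h ∈ K₀, ‖N h‖ = c * ‖h‖)
    (hsurj : ∀ h ∈ K₀, ∃ h' ∈ K₀, N h' = h)
    (z : ℂ) (hz : ‖z‖ ≠ c) :
    ∀ y ∈ K₀, ∃ x ∈ K₀, z • x - N x = y := by
  haveI : CompleteSpace ↥K₀ := hcl.completeSpace_coe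
  set T := restrictCLM N K₀ hinv with hT
  have hTnorm : ∀ x : ↥K₀, ‖T x‖ = c * ‖x‖ := fun x => hiso x x.2
  have hTinj : Function.Injective T := by
    intro x y hxy
    have h0 : ‖T (x - y)‖ = c * ‖x - y‖ := hTnorm _
    rw [map_sub, hxy, sub_self, norm_zero] at h0
    have : ‖x - y‖ = 0 := by
      rcases mul_eq_zero.mp h0.symm with h | h
      · exact absurd h (ne_of_gt hc)
      · exact h
    exact sub_eq_zero.mp (norm_eq_zero.mp this)
  have hTsurj : Function.Surjective T := by
    intro y
    obtain ⟨h', hh', hNh'⟩ := hsurj y y.2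
    exact ⟨⟨h', hh'⟩, Subtype.ext hNh'⟩
  have hTunit : IsUnit T := ContinuousLinearMap.isUnit_iff_bijective.mpr ⟨hTinj, hTsurj⟩
  obtain ⟨u, hu⟩ := hTunit
  have halg : ∀ (w : ℂ) (x : ↥K₀), (algebraMap ℂ (↥K₀ →L[ℂ] ↥K₀) w) x = w • x := by
    intro w x
    rw [Algebra.algebraMap_eq_smul_one]
    rfl
  have hTu : T * (↑u⁻¹ : ↥K₀ →L[ℂ] ↥K₀) = 1 := by rw [← hu]; exact u.mul_inv
  have hui : ∀ x : ↥K₀, ‖(↑u⁻¹ : ↥K₀ →L[ℂ] ↥K₀) x‖ = c⁻¹ * ‖x‖ := by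
    intro x
    have h1 : T ((↑u⁻¹ : ↥K₀ →L[ℂ] ↥K₀) x) = x := by
      calc T ((↑u⁻¹ : ↥K₀ →L[ℂ] ↥K₀) x) = (T * (↑u⁻¹ : ↥K₀ →L[ℂ] ↥K₀)) x := rfl
        _ = x := by rw [hTu]; rfl
    have h2 := hTnorm ((↑u⁻¹ : ↥K₀ →L[ℂ] ↥K₀) x)
    rw [h1] at h2
    rw [h2, inv_mul_cancel_left₀ (ne_of_gt hc)]
  have hMunit : IsUnit (algebraMap ℂ (↥K₀ →L[ℂ] ↥K₀) z - T) := by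
    rcases lt_or_gt_of_ne hz with hlt | hgt
    · -- |z| < c
      have hsmall : ‖algebraMap ℂ (↥K₀ →L[ℂ] ↥K₀) z * (↑u⁻¹ : ↥K₀ →L[ℂ] ↥K₀)‖ < 1 := by
        have hb : ‖algebraMap ℂ (↥K₀ →L[ℂ] ↥K₀) z * (↑u⁻¹ : ↥K₀ →L[ℂ] ↥K₀)‖
            ≤ ‖z‖ * c⁻¹ := by
          refine ContinuousLinearMap.opNorm_le_bound _ (by positivity) fun x => ?_
          have : (algebraMap ℂ (↥K₀ →L[ℂ] ↥K₀) z * (↑u⁻¹ : ↥K₀ →L[ℂ] ↥K₀)) x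
              = z • ((↑u⁻¹ : ↥K₀ →L[ℂ] ↥K₀) x) := by
            rw [ContinuousLinearMap.mul_apply, halg]
          rw [this, norm_smul, hui, mul_assoc]
        refine lt_of_le_of_lt hb ?_
        rw [← div_eq_mul_inv, div_lt_one hc]
        exact hlt
      have h1 : IsUnit (1 - algebraMap ℂ (↥K₀ →L[ℂ] ↥K₀) z * (↑u⁻¹ : ↥K₀ →L[ℂ] ↥K₀)) :=
        isUnit_one_sub_of_norm_lt_one (R := ↥K₀ →L[ℂ] ↥K₀) hsmall
      have key : algebraMap ℂ (↥K₀ →L[ℂ] ↥K₀) z - T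
          = -(T * (1 - algebraMap ℂ (↥K₀ →L[ℂ] ↥K₀) z * (↑u⁻¹ : ↥K₀ →L[ℂ] ↥K₀))) := by
        have h2 : T * (algebraMap ℂ (↥K₀ →L[ℂ] ↥K₀) z * (↑u⁻¹ : ↥K₀ →L[ℂ] ↥K₀))
            = algebraMap ℂ (↥K₀ →L[ℂ] ↥K₀) z := by
          rw [Algebra.commutes z ((↑u⁻¹ : ↥K₀ →L[ℂ] ↥K₀)), ← mul_assoc, hTu, one_mul]
        rw [mul_sub, mul_one, h2, neg_sub]
      rw [key]
      exact IsUnit.neg (IsUnit.mul ⟨u, hu⟩ h1)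
    · -- |z| > c
      have hz0 : z ≠ 0 := by
        intro h
        rw [h] at hgt
        simp at hgt
        exact absurd hgt (not_lt.mpr hc.le)
      have hsmall : ‖algebraMap ℂ (↥K₀ →L[ℂ] ↥K₀) z⁻¹ * T‖ < 1 := by
        have hb : ‖algebraMap ℂ (↥K₀ →L[ℂ] ↥K₀) z⁻¹ * T‖ ≤ (‖z‖)⁻¹ * c := by
          refine ContinuousLinearMap.opNorm_le_bound _ (by positivity) fun x => ?_
          have : (algebraMap ℂ (↥K₀ →L[ℂ] ↥K₀) z⁻¹ * T) x = z⁻¹ • (T x) := by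
            rw [ContinuousLinearMap.mul_apply, halg]
          rw [this, norm_smul, norm_inv, hTnorm]
          ring_nf
          try exact le_refl _
        refine lt_of_le_of_lt hb ?_
        have habs : 0 < ‖z‖ := lt_trans hc hgt
        rw [inv_mul_lt_iff₀ habs, mul_one]
        exact hgt
      have h1 : IsUnit (1 - algebraMap ℂ (↥K₀ →L[ℂ] ↥K₀) z⁻¹ * T) :=
        isUnit_one_sub_of_norm_lt_one (R := ↥K₀ →L[ℂ] ↥K₀) hsmall
      have h2 : IsUnit (algebraMap ℂ (↥K₀ →L[ℂ] ↥K₀) z) :=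
        ⟨Units.map (algebraMap ℂ (↥K₀ →L[ℂ] ↥K₀)).toMonoidHom (Units.mk0 z hz0), rfl⟩
      have key : algebraMap ℂ (↥K₀ →L[ℂ] ↥K₀) z - T
          = algebraMap ℂ (↥K₀ →L[ℂ] ↥K₀) z * (1 - algebraMap ℂ (↥K₀ →L[ℂ] ↥K₀) z⁻¹ * T) := by
        rw [mul_sub, mul_one, ← mul_assoc, ← map_mul, mul_inv_cancel₀ hz0, map_one, one_mul]
      rw [key]
      exact h2.mul h1
  -- conclude surjectivity
  intro y hy
  obtain ⟨v, hv⟩ := hMunit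
  refine ⟨(↑v⁻¹ : ↥K₀ →L[ℂ] ↥K₀) ⟨y, hy⟩, ((↑v⁻¹ : ↥K₀ →L[ℂ] ↥K₀) ⟨y, hy⟩).2, ?_⟩
  have hkey : (algebraMap ℂ (↥K₀ →L[ℂ] ↥K₀) z - T) ((↑v⁻¹ : ↥K₀ →L[ℂ] ↥K₀) ⟨y, hy⟩) = ⟨y, hy⟩ := by
    calc (algebraMap ℂ (↥K₀ →L[ℂ] ↥K₀) z - T) ((↑v⁻¹ : ↥K₀ →L[ℂ] ↥K₀) ⟨y, hy⟩)
        = ((↑v * ↑v⁻¹ : ↥K₀ →L[ℂ] ↥K₀)) ⟨y, hy⟩ := by rw [hv]; rfl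
      _ = ⟨y, hy⟩ := by rw [v.mul_inv]; rfl
  have hval := congrArg Subtype.val hkey
  rw [ContinuousLinearMap.sub_apply, halg] at hval
  simpa [hT] using hval


lemma adj_aux (N : K →L[ℂ] K) (c : ℝ) (hc : 0 < c) (K₀ : Submodule ℂ K)
    (hinv : ∀ h ∈ K₀, N h ∈ K₀) (hadj : ∀ h ∈ K₀, adjoint N h ∈ K₀)
    (hiso : ∀ h ∈ K₀, ‖N h‖ = c * ‖h‖) :
    ∀ h ∈ K₀, adjoint N (N h) = ((c : ℂ)^2) • h := by
  have hinner : ∀ h ∈ K₀, ∀ h' ∈ K₀, (inner ℂ (N h) (N h') : ℂ) = (c:ℂ)^2 * inner ℂ h h' := by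
    intro h hh h' hh'
    have key : (inner ℂ ((c⁻¹:ℂ) • N h) ((c⁻¹:ℂ) • N h') : ℂ) = inner ℂ h h' := by
      let g : ↥K₀ →ₗᵢ[ℂ] K :=
        { toLinearMap := (c⁻¹:ℂ) • ((N : K →ₗ[ℂ] K).comp K₀.subtype)
          norm_map' := by
            intro x
            simp only [LinearMap.smul_apply, LinearMap.comp_apply, Submodule.coe_subtype,
              ContinuousLinearMap.coe_coe]
            rw [norm_smul, norm_inv, Complex.norm_real, Real.norm_eq_abs,
              abs_of_pos hc, hiso x x.2, inv_mul_cancel_left₀ (ne_of_gt hc)]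
            exact (Submodule.norm_coe x) }
      have := g.inner_map_map ⟨h, hh⟩ ⟨h', hh'⟩
      exact this
    rw [inner_smul_left, inner_smul_right] at key
    rw [← key]
    have hconj : (starRingEnd ℂ) ((c:ℂ)⁻¹) = (c:ℂ)⁻¹ := by
      rw [map_inv₀, Complex.conj_ofReal]
    rw [hconj]
    have hc0 : (c:ℂ) ≠ 0 := by exact_mod_cast ne_of_gt hc
    field_simp
  intro h hh
  have hw : adjoint N (N h) - ((c:ℂ)^2) • h ∈ K₀ := by
    exact K₀.sub_mem (hadj _ (hinv h hh)) (K₀.smul_mem _ hh)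
  have hz : ∀ h' ∈ K₀, (inner ℂ (adjoint N (N h) - ((c:ℂ)^2) • h) h' : ℂ) = 0 := by
    intro h' hh'
    rw [inner_sub_left, inner_smul_left, adjoint_inner_left, hinner h hh h' hh']
    have : (starRingEnd ℂ) ((c:ℂ)^2) = (c:ℂ)^2 := by
      rw [map_pow, Complex.conj_ofReal]
    rw [this, sub_self]
  have := hz _ hw
  rw [inner_self_eq_zero] at this
  exact sub_eq_zero.mp this

lemma backward_dir (r : ℝ) (hr0 : 0 < r) (hr1 : r < 1) (N : K →L[ℂ] K)
    (K₁ K₂ : Submodule ℂ K)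
    (hc₁ : IsClosed (K₁ : Set K)) (hc₂ : IsClosed (K₂ : Set K))
    (horth : ∀ h₁ ∈ K₁, ∀ h₂ ∈ K₂, (inner ℂ h₁ h₂ : ℂ) = 0)
    (hsup : K₁ ⊔ K₂ = ⊤)
    (hN₁ : ∀ h ∈ K₁, N h ∈ K₁) (hA₁ : ∀ h ∈ K₁, adjoint N h ∈ K₁)
    (hN₂ : ∀ h ∈ K₂, N h ∈ K₂) (hA₂ : ∀ h ∈ K₂, adjoint N h ∈ K₂)
    (hiso₁ : ∀ h ∈ K₁, ‖N h‖ = ‖h‖) (hsurj₁ : ∀ h ∈ K₁, ∃ h' ∈ K₁, N h' = h)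
    (hiso₂ : ∀ h ∈ K₂, ‖N h‖ = r * ‖h‖) (hsurj₂ : ∀ h ∈ K₂, ∃ h' ∈ K₂, N h' = h) :
    (adjoint N * N = N * adjoint N ∧
      spectrum ℂ N ⊆ {z : ℂ | ‖z‖ = 1 ∨ ‖z‖ = r}) := by
  have hiso₁' : ∀ h ∈ K₁, ‖N h‖ = 1 * ‖h‖ := by intro h hh; rw [one_mul]; exact hiso₁ h hh
  have hK₁ : ∀ h ∈ K₁, adjoint N (N h) = h := by
    have := adj_aux N 1 one_pos K₁ hN₁ hA₁ hiso₁'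
    intro h hh
    simpa using this h hh
  have hK₂ : ∀ h ∈ K₂, adjoint N (N h) = ((r:ℂ)^2) • h := adj_aux N r hr0 K₂ hN₂ hA₂ hiso₂
  have hK₁' : ∀ h ∈ K₁, N (adjoint N h) = h := by
    intro h hh
    obtain ⟨h', hh', hNh'⟩ := hsurj₁ h hh
    have : adjoint N h = h' := by rw [← hNh', hK₁ h' hh']
    rw [this, hNh']
  have hK₂' : ∀ h ∈ K₂, N (adjoint N h) = ((r:ℂ)^2) • h := by
    intro h hh
    obtain ⟨h', hh', hNh'⟩ := hsurj₂ h hh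
    have : adjoint N h = ((r:ℂ)^2) • h' := by rw [← hNh', hK₂ h' hh']
    rw [this, map_smul, hNh']
  have hdecomp : ∀ x : K, ∃ a ∈ K₁, ∃ b ∈ K₂, x = a + b := by
    intro x
    have : x ∈ K₁ ⊔ K₂ := by rw [hsup]; exact Submodule.mem_top
    rw [Submodule.mem_sup] at this
    obtain ⟨a, ha, b, hb, hab⟩ := this
    exact ⟨a, ha, b, hb, hab.symm⟩
  constructor
  · ext x
    obtain ⟨a, ha, b, hb, rfl⟩ := hdecomp x
    simp only [ContinuousLinearMap.mul_apply, map_add]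
    rw [hK₁ a ha, hK₂ b hb, hK₁' a ha, hK₂' b hb]
  · intro z hzmem
    by_contra hz
    simp only [Set.mem_setOf_eq, not_or] at hz
    obtain ⟨hz1, hzr⟩ := hz
    have halg : ∀ x : K, (algebraMap ℂ (K →L[ℂ] K) z - N) x = z • x - N x := by
      intro x
      rw [ContinuousLinearMap.sub_apply, Algebra.algebraMap_eq_smul_one]
      rfl
    have hbij : Function.Bijective (algebraMap ℂ (K →L[ℂ] K) z - N) := by
      constructor
      · intro x y hxy
        have hx0 : (algebraMap ℂ (K →L[ℂ] K) z - N) (x - y) = 0 := by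
          rw [map_sub, hxy, sub_self]
        suffices h : x - y = 0 by rwa [sub_eq_zero] at h
        obtain ⟨a, ha, b, hb, hab⟩ := hdecomp (x - y)
        rw [hab] at hx0 ⊢
        have hx' : (z • a - N a) + (z • b - N b) = 0 := by
          rw [halg, map_add, smul_add] at hx0
          rw [← hx0]
          abel
        have hMa : z • a - N a ∈ K₁ := K₁.sub_mem (K₁.smul_mem _ ha) (hN₁ a ha)
        have hMb : z • b - N b ∈ K₂ := K₂.sub_mem (K₂.smul_mem _ hb) (hN₂ b hb)
        have horthM : (inner ℂ (z • a - N a) (z • b - N b) : ℂ) = 0 :=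
          horth _ hMa _ hMb
        have hMa0 : z • a - N a = 0 := by
          have heq : z • a - N a = -(z • b - N b) := by
            rw [eq_neg_iff_add_eq_zero]; exact hx'
          have : (inner ℂ (z • a - N a) (z • a - N a) : ℂ) = 0 := by
            nth_rewrite 2 [heq]
            rw [inner_neg_right, horthM, neg_zero]
          exact inner_self_eq_zero.mp this
        have hMb0 : z • b - N b = 0 := by
          rw [hMa0, zero_add] at hx'
          exact hx'
        have ha0 : a = 0 := by
          by_contra han
          have hna : ‖a‖ ≠ 0 := fun h => han (norm_eq_zero.mp h)
          have h4 : ‖z • a‖ = ‖N a‖ := by rw [sub_eq_zero.mp hMa0]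
          rw [hiso₁ a ha, norm_smul] at h4
          exact hz1 (mul_right_cancel₀ hna (h4.trans (one_mul ‖a‖).symm))
        have hb0 : b = 0 := by
          by_contra hbn
          have hnb : ‖b‖ ≠ 0 := fun h => hbn (norm_eq_zero.mp h)
          have h4 : ‖z • b‖ = ‖N b‖ := by rw [sub_eq_zero.mp hMb0]
          rw [hiso₂ b hb, norm_smul] at h4
          exact hzr (mul_right_cancel₀ hnb h4)
        rw [ha0, hb0, add_zero]
      · intro y
        obtain ⟨a, ha, b, hb, rfl⟩ := hdecomp y
        obtain ⟨x₁, hx₁, hx₁e⟩ := surj_aux N 1 one_pos K₁ hc₁ hN₁ hiso₁' hsurj₁ z hz1 a ha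
        obtain ⟨x₂, hx₂, hx₂e⟩ := surj_aux N r hr0 K₂ hc₂ hN₂ hiso₂ hsurj₂ z hzr b hb
        refine ⟨x₁ + x₂, ?_⟩
        rw [halg, map_add, smul_add]
        rw [← hx₁e, ← hx₂e]
        abel
    have : IsUnit (algebraMap ℂ (K →L[ℂ] K) z - N) :=
      ContinuousLinearMap.isUnit_iff_bijective.mpr hbij
    exact (spectrum.notMem_iff.mpr this) hzmem

lemma forward_dir (r : ℝ) (hr0 : 0 < r) (hr1 : r < 1) (N : K →L[ℂ] K)
    (hnorm : adjoint N * N = N * adjoint N)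
    (hspec : spectrum ℂ N ⊆ {z : ℂ | ‖z‖ = 1 ∨ ‖z‖ = r}) :
    ∃ K₁ K₂ : Submodule ℂ K,
      IsClosed (K₁ : Set K) ∧ IsClosed (K₂ : Set K) ∧
      (∀ h₁ ∈ K₁, ∀ h₂ ∈ K₂, (inner ℂ h₁ h₂ : ℂ) = 0) ∧
      K₁ ⊔ K₂ = ⊤ ∧
      (∀ h ∈ K₁, N h ∈ K₁) ∧ (∀ h ∈ K₁, adjoint N h ∈ K₁) ∧
      (∀ h ∈ K₂, N h ∈ K₂) ∧ (∀ h ∈ K₂, adjoint N h ∈ K₂) ∧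
      (∀ h ∈ K₁, ‖N h‖ = ‖h‖) ∧ (∀ h ∈ K₁, ∃ h' ∈ K₁, N h' = h) ∧
      (∀ h ∈ K₂, ‖N h‖ = r * ‖h‖) ∧ (∀ h ∈ K₂, ∃ h' ∈ K₂, N h' = h) := by
  haveI hsn : IsStarNormal N := ⟨by rw [commute_iff_eq, star_eq_adjoint, hnorm]⟩
  set f : ℂ → ℂ := fun z => ((max 0 (min 1 ((‖z‖ - r)/(1-r)))) : ℝ) with hf
  have hf1 : ∀ z : ℂ, ‖z‖ = 1 → f z = 1 := by
    intro z hz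
    simp only [hf, hz]
    rw [div_self (by linarith), min_self, max_eq_right (by norm_num)]
    norm_num
  have hfr : ∀ z : ℂ, ‖z‖ = r → f z = 0 := by
    intro z hz
    simp only [hf, hz]
    rw [sub_self, zero_div, min_eq_right (by norm_num), max_self]
    norm_num
  have hfc : Continuous f := by
    apply Complex.continuous_ofReal.comp
    apply Continuous.max continuous_const
    apply Continuous.min continuous_const
    exact (continuous_norm.sub continuous_const).div_const _
  have hfC : ContinuousOn f (spectrum ℂ N) := hfc.continuousOn
  set P := cfc f N with hPdef
  -- P is idempotent
  have hP2 : P * P = P := by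
    rw [hPdef, ← cfc_mul f f N hfC hfC]
    apply cfc_congr
    intro z hz
    show f z * f z = f z
    rcases hspec hz with h | h
    · rw [hf1 z h]; norm_num
    · rw [hfr z h]; norm_num
  -- P is selfadjoint
  have hPadj : adjoint P = P := by
    rw [← star_eq_adjoint, hPdef, ← cfc_star f N]
    apply cfc_congr
    intro z _
    show star (f z) = f z
    simp only [hf, RCLike.star_def, Complex.conj_ofReal]
  -- commutation
  have hcomm : ∀ g₁ g₂ : ℂ → ℂ, Continuous g₁ → Continuous g₂ →
      cfc g₁ N * cfc g₂ N = cfc g₂ N * cfc g₁ N := by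
    intro g₁ g₂ hg₁ hg₂
    rw [← cfc_mul g₁ g₂ N hg₁.continuousOn hg₂.continuousOn,
      ← cfc_mul g₂ g₁ N hg₂.continuousOn hg₁.continuousOn]
    exact cfc_congr fun z _ => mul_comm _ _
  have hNP : N * P = P * N := by
    have := hcomm (fun z => z) f continuous_id hfc
    rwa [cfc_id' ℂ N hsn] at this
  have hAP : adjoint N * P = P * adjoint N := by
    have := hcomm (star ·) f continuous_star hfc
    rwa [cfc_star_id (R := ℂ) (ha := hsn), star_eq_adjoint] at this
  -- the key identity
  have hsz : ∀ z : ℂ, star z * z = ((‖z‖ : ℝ) : ℂ)^2 := by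
    intro z
    rw [Complex.star_def, mul_comm, Complex.mul_conj, Complex.normSq_eq_norm_sq]
    push_cast
    ring
  have keyAll : adjoint N * N = P + ((r:ℂ)^2) • (1 - P) := by
    have h1 : adjoint N * N = cfc (fun z : ℂ => star z * z) N := by
      rw [← star_eq_adjoint, ← cfc_star_id (R := ℂ) (a := N) (ha := hsn)]
      nth_rewrite 2 [← cfc_id' ℂ N hsn]
      rw [← cfc_mul (star ·) (fun z => z) N continuous_star.continuousOn
        continuous_id.continuousOn]
    have h2 : P + ((r:ℂ)^2) • (1 - P) = cfc (fun z => f z + (r:ℂ)^2 * (1 - f z)) N := by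
      rw [cfc_add N f (fun z => (r:ℂ)^2 * (1 - f z)) hfC
          ((continuous_const.mul (continuous_const.sub hfc)).continuousOn),
        cfc_const_mul ((r:ℂ)^2) (fun z => 1 - f z) N
          ((continuous_const.sub hfc).continuousOn),
        cfc_sub (fun _ : ℂ => (1:ℂ)) f N continuous_const.continuousOn hfC,
        cfc_const_one ℂ N]
    rw [h1, h2]
    apply cfc_congr
    intro z hz
    show star z * z = f z + (r:ℂ)^2 * (1 - f z)
    rcases hspec hz with h | h
    · rw [hsz, h, hf1 z h]
      norm_num
    · rw [hsz, h, hfr z h]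
      push_cast
      ring
  -- pointwise versions
  have hPP : ∀ x, P (P x) = P x := fun x => by
    rw [← ContinuousLinearMap.mul_apply, hP2]
  have hNN : ∀ x, adjoint N (N x) = P x + ((r:ℂ)^2) • (x - P x) := by
    intro x
    have := congrArg (fun A : K →L[ℂ] K => A x) keyAll
    simpa using this
  set K₁ : Submodule ℂ K := (1 - P).ker with hK₁def
  set K₂ : Submodule ℂ K := P.ker with hK₂def
  have hmem₁ : ∀ h, h ∈ K₁ ↔ P h = h := by
    intro h
    rw [hK₁def, LinearMap.mem_ker]
    constructor
    · intro hh
      have : h - P h = 0 := by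
        rw [← hh]
        simp
    -- (1 - P) h = h - P h
      rw [sub_eq_zero] at this
      exact this.symm
    · intro hh
      show (1 - P) h = 0
      rw [ContinuousLinearMap.sub_apply, ContinuousLinearMap.one_apply, hh, sub_self]
  have hmem₂ : ∀ h, h ∈ K₂ ↔ P h = 0 := fun h => LinearMap.mem_ker
  -- facts used repeatedly
  have hNN₁ : ∀ h ∈ K₁, adjoint N (N h) = h := by
    intro h hh
    rw [hNN, (hmem₁ h).mp hh, sub_self, smul_zero, add_zero]
  have hNN₂ : ∀ h ∈ K₂, adjoint N (N h) = ((r:ℂ)^2) • h := by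
    intro h hh
    rw [hNN, (hmem₂ h).mp hh, sub_zero, zero_add]
  have hPN' : ∀ x, P (N x) = N (P x) := by
    intro x
    rw [← ContinuousLinearMap.mul_apply, ← hNP, ContinuousLinearMap.mul_apply]
  have hPA' : ∀ x, P (adjoint N x) = adjoint N (P x) := by
    intro x
    rw [← ContinuousLinearMap.mul_apply, ← hAP, ContinuousLinearMap.mul_apply]
  refine ⟨K₁, K₂, ?_, ?_, ?_, ?_, ?_, ?_, ?_, ?_, ?_, ?_, ?_, ?_⟩
  · exact ContinuousLinearMap.isClosed_ker (1 - P)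
  · exact ContinuousLinearMap.isClosed_ker P
  · intro h₁ hh₁ h₂ hh₂
    have e₁ := (hmem₁ h₁).mp hh₁
    have e₂ := (hmem₂ h₂).mp hh₂
    calc (inner ℂ h₁ h₂ : ℂ) = inner ℂ (P h₁) h₂ := by rw [e₁]
      _ = inner ℂ (adjoint P h₁) h₂ := by rw [hPadj]
      _ = inner ℂ h₁ (P h₂) := by rw [adjoint_inner_left]
      _ = 0 := by rw [e₂, inner_zero_right]
  · rw [eq_top_iff]
    intro x _
    rw [Submodule.mem_sup]
    refine ⟨P x, (hmem₁ (P x)).mpr (hPP x), x - P x, (hmem₂ _).mpr ?_, by abel⟩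
    rw [map_sub, hPP, sub_self]
  · intro h hh
    rw [hmem₁] at hh ⊢
    rw [hPN', hh]
  · intro h hh
    rw [hmem₁] at hh ⊢
    rw [hPA', hh]
  · intro h hh
    rw [hmem₂] at hh ⊢
    rw [hPN', hh, map_zero]
  · intro h hh
    rw [hmem₂] at hh ⊢
    rw [hPA', hh, map_zero]
  · intro h hh
    have hin : (inner ℂ (N h) (N h) : ℂ) = inner ℂ h h := by
      rw [← adjoint_inner_left, hNN₁ h hh]
    rw [inner_self_eq_norm_sq_to_K, inner_self_eq_norm_sq_to_K] at hin
    have : ‖N h‖^2 = ‖h‖^2 := by exact_mod_cast hin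
    rw [← Real.sqrt_sq (norm_nonneg (N h)), ← Real.sqrt_sq (norm_nonneg h), this]
  · intro h hh
    refine ⟨adjoint N h, ?_, ?_⟩
    · rw [hmem₁] at *
      rw [hPA', hh]
    · rw [← ContinuousLinearMap.mul_apply, ← hnorm, ContinuousLinearMap.mul_apply]
      exact hNN₁ h hh
  · intro h hh
    have hin : (inner ℂ (N h) (N h) : ℂ) = ((r:ℂ)^2) * inner ℂ h h := by
      rw [← adjoint_inner_left, hNN₂ h hh, inner_smul_left, map_pow, Complex.conj_ofReal]
    rw [inner_self_eq_norm_sq_to_K, inner_self_eq_norm_sq_to_K] at hin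
    have h2' : ‖N h‖^2 = r^2 * ‖h‖^2 := by
      norm_cast at hin
      simp only [show ((RCLike.ofReal : ℝ → ℂ)) = Complex.ofReal from rfl] at hin
      rw [← Complex.ofReal_mul] at hin
      exact_mod_cast hin
    have h2 : ‖N h‖^2 = (r * ‖h‖)^2 := by rw [h2']; ring
    rw [← Real.sqrt_sq (norm_nonneg (N h)), ← Real.sqrt_sq (by positivity : (0:ℝ) ≤ r * ‖h‖), h2]
  · intro h hh
    have hr2 : ((r:ℂ)^2) ≠ 0 := by
      have : (r:ℂ) ≠ 0 := by exact_mod_cast ne_of_gt hr0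
      exact pow_ne_zero 2 this
    refine ⟨((r:ℂ)^2)⁻¹ • adjoint N h, ?_, ?_⟩
    · rw [hmem₂] at hh ⊢
      rw [map_smul, hPA', hh, map_zero, smul_zero]
    · rw [map_smul, ← ContinuousLinearMap.mul_apply, ← hnorm, ContinuousLinearMap.mul_apply,
        hNN₂ h hh, smul_smul, inv_mul_cancel₀ hr2, one_smul]


end AuxLemmas

/-- `T` is an `𝔸_r`-unitary: a normal operator with spectrum in the boundary
`{z : |z| = 1} ∪ {z : |z| = r}` of the annulus. -/
noncomputable def IsArUnitary {K : Type*} [NormedAddCommGroup K] [InnerProductSpace ℂ K]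
    [CompleteSpace K] (r : ℝ) (N : K →L[ℂ] K) : Prop :=
  adjoint N * N = N * adjoint N ∧
  spectrum ℂ N ⊆ {z : ℂ | ‖z‖ = 1 ∨ ‖z‖ = r}
theorem stmt9 {K : Type*} [NormedAddCommGroup K] [InnerProductSpace ℂ K] [CompleteSpace K]
    (r : ℝ) (hr0 : 0 < r) (hr1 : r < 1) (N : K →L[ℂ] K) :
    IsArUnitary r N ↔
      ∃ K₁ K₂ : Submodule ℂ K,
        IsClosed (K₁ : Set K) ∧ IsClosed (K₂ : Set K) ∧
        (∀ h₁ ∈ K₁, ∀ h₂ ∈ K₂, (inner ℂ h₁ h₂ : ℂ) = 0) ∧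
        K₁ ⊔ K₂ = ⊤ ∧
        (∀ h ∈ K₁, N h ∈ K₁) ∧ (∀ h ∈ K₁, adjoint N h ∈ K₁) ∧
        (∀ h ∈ K₂, N h ∈ K₂) ∧ (∀ h ∈ K₂, adjoint N h ∈ K₂) ∧
        (∀ h ∈ K₁, ‖N h‖ = ‖h‖) ∧ (∀ h ∈ K₁, ∃ h' ∈ K₁, N h' = h) ∧
        (∀ h ∈ K₂, ‖N h‖ = r * ‖h‖) ∧ (∀ h ∈ K₂, ∃ h' ∈ K₂, N h' = h) := by
  unfold IsArUnitary
  constructor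
  · rintro ⟨h1, h2⟩
    exact forward_dir r hr0 hr1 N h1 h2
  · rintro ⟨K₁, K₂, hc₁, hc₂, horth, hsup, hN₁, hA₁, hN₂, hA₂, hiso₁, hsurj₁, hiso₂, hsurj₂⟩
    exact backward_dir r hr0 hr1 N K₁ K₂ hc₁ hc₂ horth hsup hN₁ hA₁ hN₂ hA₂ hiso₁ hsurj₁
      hiso₂ hsurj₂
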